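/- Let H = (V,E) be a connected hypergraph and 𝒫 a feasible partition of V whose shrunk hypergraph H_𝒫 is vertex-biconnected. Then the vector w = (1/(|𝒫|-1))·1_{δ(𝒫)} is an extreme point of the admissible set Adm(Ω(H)) = {ρ ∈ ℝ^E_{≥0} : x·ρ ≥ 1 for all x ∈ Ω(H)}. -/

import Mathlib

open Finset
open scoped Classical

noncomputable section

variable {V E : Type*}

/-- The set of hyperedges meeting at least two parts of the partition `P` (the cut `δ(P)`). -/
def hcut [Fintype V] [DecidableEq V] [Fintype E] (edge : E → Finset V)
    (P : Finpartition (univ : Finset V)) : Finset E :=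
  univ.filter fun e => ∃ p ∈ P.parts, ∃ q ∈ P.parts,
    p ≠ q ∧ (edge e ∩ p).Nonempty ∧ (edge e ∩ q).Nonempty

/-- The hyperedges entirely contained in the vertex set `X`. -/
def edgesIn [DecidableEq V] [Fintype E] (edge : E → Finset V) (X : Finset V) : Finset E :=
  univ.filter fun e => edge e ⊆ X

/-- The strength `S(H)`. -/
def strength [Fintype V] [DecidableEq V] [Fintype E] (edge : E → Finset V) : ℝ :=
  sInf { r : ℝ | ∃ P : Finpartition (univ : Finset V), 2 ≤ P.parts.card ∧
    r = ((hcut edge P).card : ℝ) / ((P.parts.card : ℝ) - 1) }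

/-- The weighted strength `S_σ(H)`. -/
def strengthW [Fintype V] [DecidableEq V] [Fintype E] (σ : E → ℝ) (edge : E → Finset V) : ℝ :=
  sInf { r : ℝ | ∃ P : Finpartition (univ : Finset V), 2 ≤ P.parts.card ∧
    r = (∑ e ∈ hcut edge P, σ e) / ((P.parts.card : ℝ) - 1) }

/-- The fractional arboricity `D(H)`. -/
def arboricity [Fintype V] [DecidableEq V] [Fintype E] (edge : E → Finset V) : ℝ :=
  sSup { r : ℝ | ∃ X : Finset V, 2 ≤ X.card ∧
    r = ((edgesIn edge X).card : ℝ) / ((X.card : ℝ) - 1) }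

/-- Connectivity of the subhypergraph induced by the vertex set `W`
(only hyperedges contained in `W` are used). -/
def ConnectedIn (edge : E → Finset V) (W : Finset V) : Prop :=
  ∀ X ⊆ W, X.Nonempty → X ≠ W →
    ∃ e, edge e ⊆ W ∧ (edge e ∩ X).Nonempty ∧ ((edge e ∩ W) \ X).Nonempty

/-- Connectivity of the trace hypergraph on the vertex set `W`
(each hyperedge is replaced by its intersection with `W`, as in vertex deletion). -/
def ConnectedOn (edge : E → Finset V) (W : Finset V) : Prop :=
  ∀ X ⊆ W, X.Nonempty → X ≠ W →
    ∃ e, ((edge e ∩ W) ∩ X).Nonempty ∧ ((edge e ∩ W) \ X).Nonempty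

/-- A hypergraph is connected if every nonempty proper vertex subset is crossed by a hyperedge. -/
def HConnected [Fintype V] (edge : E → Finset V) : Prop :=
  ConnectedIn edge univ

/-- `H` is partition-connected if `|δ(P)| ≥ |P| - 1` for every partition `P` of `V`. -/
def PartitionConnected [Fintype V] [DecidableEq V] [Fintype E] (edge : E → Finset V) : Prop :=
  ∀ P : Finpartition (univ : Finset V), P.parts.card - 1 ≤ (hcut edge P).card

/-- A partition is feasible if each part induces a connected subhypergraph. -/
def Feasible [Fintype V] [DecidableEq V] (edge : E → Finset V) (P : Finpartition (univ : Finset V)) : Prop :=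
  ∀ p ∈ P.parts, ConnectedIn edge p

/-- The edges of the shrunk hypergraph `H_P`: vertices are the parts of `P`, and a hyperedge
becomes the set of parts it meets. -/
def shrunkEdge [Fintype V] [DecidableEq V] (edge : E → Finset V)
    (P : Finpartition (univ : Finset V)) (e : E) : Finset {p : Finset V // p ∈ P.parts} :=
  univ.filter fun p => (edge e ∩ p.1).Nonempty

/-- The shrunk hypergraph `H_P` is vertex-biconnected: it is connected and no single
vertex deletion disconnects it. -/
def ShrunkBiconnected [Fintype V] [DecidableEq V] [Fintype E] (edge : E → Finset V)
    (P : Finpartition (univ : Finset V)) : Prop :=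
  ConnectedIn (shrunkEdge edge P) univ ∧
  ∀ p : {p : Finset V // p ∈ P.parts}, ConnectedOn (shrunkEdge edge P) (univ \ {p})

/-- `F` is a hypertree: a hyperforest of size `|V| - 1`. -/
def IsHypertree [Fintype V] [DecidableEq V] (edge : E → Finset V) (F : Finset E) : Prop :=
  F.card = Fintype.card V - 1 ∧
  ∀ X : Finset V, X.Nonempty → (F.filter fun e => edge e ⊆ X).card ≤ X.card - 1

/-- `m` is the multiplicity vector of a multiset of hyperedges forming a hypertree on `V`. -/
def IsMultiTree [Fintype V] [DecidableEq V] [Fintype E] (edge : E → Finset V) (m : E → ℕ) : Prop :=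
  (∑ e, m e) = Fintype.card V - 1 ∧
  ∀ X : Finset V, X.Nonempty → (∑ e ∈ edgesIn edge X, m e) ≤ X.card - 1

/-- The multi-tree family `Ω(H)` as a set of usage vectors in `ℝ^E`. -/
def OmegaSet [Fintype V] [DecidableEq V] [Fintype E] (edge : E → Finset V) : Set (E → ℝ) :=
  { x | ∃ m : E → ℕ, IsMultiTree edge m ∧ x = fun e => (m e : ℝ) }

/-- The hypertree family `Γ(H)` as a set of (indicator) usage vectors in `ℝ^E`. -/
def GammaSet [Fintype V] [DecidableEq V] [Fintype E] (edge : E → Finset V) : Set (E → ℝ) :=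
  { x | ∃ F : Finset E, IsHypertree edge F ∧ x = fun e => if e ∈ F then (1 : ℝ) else 0 }

/-- The admissible set of a family of usage vectors. -/
def AdmSet [Fintype E] (G : Set (E → ℝ)) : Set (E → ℝ) :=
  { ρ | (∀ e, 0 ≤ ρ e) ∧ ∀ x ∈ G, 1 ≤ ∑ e, x e * ρ e }

/-- The weighted 1-modulus of a family of usage vectors. -/
def Mod1 [Fintype E] (σ : E → ℝ) (G : Set (E → ℝ)) : ℝ :=
  sInf { t : ℝ | ∃ ρ ∈ AdmSet G, t = ∑ e, σ e * ρ e }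

/-- `w` is an extreme point of `S`: it lies in `S` and is not the midpoint of two
distinct points of `S`. -/
def IsExtremePt [Fintype E] (S : Set (E → ℝ)) (w : E → ℝ) : Prop :=
  w ∈ S ∧ ∀ y ∈ S, ∀ z ∈ S, (∀ e, w e = (y e + z e) / 2) → y = z

/-- The rank function of the hypergraphic matroid `M(H)` (Frank et al.):
`r(F) = min { |V| - |P| + |δ_F(P)| }` over partitions `P` of `V`. -/
def hrank [Fintype V] [DecidableEq V] [Fintype E] [DecidableEq E]
    (edge : E → Finset V) (F : Finset E) : ℕ :=
  sInf { n : ℕ | ∃ P : Finpartition (univ : Finset V),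
    n = Fintype.card V - P.parts.card + (hcut edge P ∩ F).card }

/-- The (unweighted) strength of the hypergraphic matroid `M(H)`. -/
def mstrength [Fintype V] [DecidableEq V] [Fintype E] [DecidableEq E]
    (edge : E → Finset V) : ℝ :=
  sInf { r : ℝ | ∃ X : Finset E, hrank edge (univ \ X) < hrank edge univ ∧
    r = (X.card : ℝ) / ((hrank edge univ : ℝ) - (hrank edge (univ \ X) : ℝ)) }

/-- The fractional arboricity of the hypergraphic matroid `M(H)`. -/
def marboricity [Fintype V] [DecidableEq V] [Fintype E] [DecidableEq E]
    (edge : E → Finset V) : ℝ :=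
  sSup { r : ℝ | ∃ X : Finset E, 0 < hrank edge X ∧ r = (X.card : ℝ) / (hrank edge X : ℝ) }

end

namespace Stmt7Aux

variable {V E : Type*}

inductive Grows [DecidableEq V] (ed : E → Finset V) : Finset V → List (E × V × V) → Finset V → Prop
  | nil (X : Finset V) : Grows ed X [] X
  | cons (X X' : Finset V) (L : List (E × V × V)) (e : E) (a b : V)
      (ha : a ∈ X) (hb : b ∉ X) (hae : a ∈ ed e) (hbe : b ∈ ed e)
      (h : Grows ed (insert b X) L X') : Grows ed X ((e, a, b) :: L) X'

noncomputable def cnt {α : Type*} (p : α → Prop) : List α → ℕ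
  | [] => 0
  | a :: l => (if p a then 1 else 0) + cnt p l

@[simp] lemma cnt_nil {α : Type*} (p : α → Prop) : cnt p [] = 0 := rfl

@[simp] lemma cnt_cons {α : Type*} (p : α → Prop) (a : α) (l : List α) :
    cnt p (a :: l) = (if p a then 1 else 0) + cnt p l := rfl

lemma cnt_append {α : Type*} (p : α → Prop) (l₁ l₂ : List α) :
    cnt p (l₁ ++ l₂) = cnt p l₁ + cnt p l₂ := by
  induction l₁ with
  | nil => simp
  | cons a l ih => simp [ih]; ring

lemma cnt_eq_length {α : Type*} {p : α → Prop} {l : List α} (h : ∀ a ∈ l, p a) :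
    cnt p l = l.length := by
  induction l with
  | nil => simp
  | cons a l ih =>
    simp only [cnt_cons, if_pos (h a (by simp)), List.length_cons]
    rw [ih (fun x hx => h x (by simp [hx]))]; ring

lemma cnt_eq_zero {α : Type*} {p : α → Prop} {l : List α} (h : ∀ a ∈ l, ¬ p a) :
    cnt p l = 0 := by
  induction l with
  | nil => simp
  | cons a l ih =>
    simp only [cnt_cons, if_neg (h a (by simp))]
    rw [ih (fun x hx => h x (by simp [hx]))]

lemma cnt_congr {α : Type*} {p q : α → Prop} {l : List α} (h : ∀ a ∈ l, p a ↔ q a) :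
    cnt p l = cnt q l := by
  induction l with
  | nil => simp
  | cons a l ih =>
    simp only [cnt_cons]
    rw [ih (fun x hx => h x (by simp [hx]))]
    congr 1
    simp [h a (by simp)]

lemma sum_cnt {α β : Type*} [DecidableEq β] (S : Finset β) (f : α → β) (L : List α) :
    ∑ g ∈ S, cnt (fun t => f t = g) L = cnt (fun t => f t ∈ S) L := by
  induction L with
  | nil => simp
  | cons a l ih =>
    simp only [cnt_cons, Finset.sum_add_distrib, ih]
    congr 1
    by_cases h : f a ∈ S
    · rw [if_pos h, Finset.sum_eq_single_of_mem (f a) h]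
      · simp
      · intro b _ hb; rw [if_neg (fun he => hb he.symm)]
    · rw [if_neg h, Finset.sum_eq_zero]
      intro b hb
      rw [if_neg (fun he => h (by rw [he]; exact hb))]

section GrowsLemmas

variable [DecidableEq V] {ed ed' : E → Finset V}

lemma Grows.subset {X Y : Finset V} {L : List (E × V × V)} (h : Grows ed X L Y) : X ⊆ Y := by
  induction h with
  | nil => exact Finset.Subset.refl _
  | cons X X' L e a b ha hb hae hbe h ih => exact (Finset.subset_insert _ _).trans ih

lemma Grows.card_eq {X Y : Finset V} {L : List (E × V × V)} (h : Grows ed X L Y) :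
    Y.card = X.card + L.length := by
  induction h with
  | nil => simp
  | cons X X' L e a b ha hb hae hbe h ih =>
    rw [List.length_cons, ih, Finset.card_insert_of_notMem hb]; ring

lemma Grows.append {X Y Z : Finset V} {L L' : List (E × V × V)}
    (h : Grows ed X L Y) (h' : Grows ed Y L' Z) : Grows ed X (L ++ L') Z := by
  induction h with
  | nil => exact h'
  | cons X X' L e a b ha hb hae hbe h ih => exact Grows.cons _ _ _ e a b ha hb hae hbe (ih h')

lemma Grows.mono {X Y : Finset V} {L : List (E × V × V)}
    (hed : ∀ e, ed e ⊆ ed' e) (h : Grows ed X L Y) : Grows ed' X L Y := by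
  induction h with
  | nil => exact Grows.nil _
  | cons X X' L e a b ha hb hae hbe h ih =>
    exact Grows.cons _ _ _ e a b ha hb (hed e hae) (hed e hbe) ih

lemma Grows.steps {X Y : Finset V} {L : List (E × V × V)} (h : Grows ed X L Y) :
    ∀ t ∈ L, t.2.1 ∈ ed t.1 ∧ t.2.2 ∈ ed t.1 ∧ t.2.1 ≠ t.2.2 := by
  induction h with
  | nil => simp
  | cons X X' L e a b ha hb hae hbe h ih =>
    intro t ht
    rcases List.mem_cons.mp ht with rfl | ht
    · exact ⟨hae, hbe, fun hab => hb ((show a = b from hab) ▸ ha)⟩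
    · exact ih t ht

lemma Grows.union {X Y : Finset V} {L : List (E × V × V)} (h : Grows ed X L Y) :
    ∀ C : Finset V, Disjoint C (Y \ X) → Grows ed (X ∪ C) L (Y ∪ C) := by
  induction h with
  | nil => intro C _; exact Grows.nil _
  | cons X X' L e a b ha hb hae hbe h ih =>
    intro C hC
    have hbY : b ∈ X' := h.subset (Finset.mem_insert_self _ _)
    have hbC : b ∉ C := fun hbC =>
      Finset.disjoint_left.mp hC hbC (Finset.mem_sdiff.mpr ⟨hbY, hb⟩)
    refine Grows.cons _ _ _ e a b (Finset.mem_union_left _ ha) ?_ hae hbe ?_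
    · simp [hb, hbC]
    · have heq : insert b (X ∪ C) = insert b X ∪ C := by rw [Finset.insert_union]
      rw [heq]
      refine ih C (Finset.disjoint_left.mpr fun x hx hx' => ?_)
      rcases Finset.mem_sdiff.mp hx' with ⟨hxY, hxX⟩
      exact Finset.disjoint_left.mp hC hx
        (Finset.mem_sdiff.mpr ⟨hxY, fun h2 => hxX (Finset.mem_insert_of_mem h2)⟩)

lemma Grows.count_le {X Y : Finset V} {L : List (E × V × V)} (h : Grows ed X L Y) (Z : Finset V) :
    cnt (fun t => ed t.1 ⊆ Z) L ≤ (Z ∩ (Y \ X)).card := by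
  induction h with
  | nil => simp
  | cons X X' L e a b ha hb hae hbe h ih =>
    have hbY : b ∈ X' := h.subset (Finset.mem_insert_self _ _)
    have hsub : Z ∩ (X' \ insert b X) ⊆ (Z ∩ (X' \ X)).erase b := by
      intro x hx
      rcases Finset.mem_inter.mp hx with ⟨hxZ, hx2⟩
      rcases Finset.mem_sdiff.mp hx2 with ⟨hxY, hxX⟩
      refine Finset.mem_erase.mpr ⟨fun hxb => hxX (hxb ▸ Finset.mem_insert_self _ _), ?_⟩
      exact Finset.mem_inter.mpr
        ⟨hxZ, Finset.mem_sdiff.mpr ⟨hxY, fun h2 => hxX (Finset.mem_insert_of_mem h2)⟩⟩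
    have hcard2 := Finset.card_le_card hsub
    have herase : ((Z ∩ (X' \ X)).erase b).card ≤ (Z ∩ (X' \ X)).card :=
      Finset.card_le_card (Finset.erase_subset _ _)
    by_cases hcase : ed e ⊆ Z
    · have hbZ : b ∈ Z ∩ (X' \ X) :=
        Finset.mem_inter.mpr ⟨hcase hbe, Finset.mem_sdiff.mpr ⟨hbY, hb⟩⟩
      have hcard : ((Z ∩ (X' \ X)).erase b).card = (Z ∩ (X' \ X)).card - 1 :=
        Finset.card_erase_of_mem hbZ
      have hpos : 1 ≤ (Z ∩ (X' \ X)).card := Finset.card_pos.mpr ⟨b, hbZ⟩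
      simp only [cnt_cons, if_pos hcase]
      omega
    · simp only [cnt_cons, if_neg hcase, zero_add]
      omega

lemma Grows.count_lt {X Y : Finset V} {L : List (E × V × V)} (h : Grows ed X L Y) (Z : Finset V)
    (hdisj : Disjoint Z X) (hne : (Z ∩ Y).Nonempty) :
    cnt (fun t => ed t.1 ⊆ Z) L + 1 ≤ (Z ∩ Y).card := by
  induction h with
  | nil =>
    simp only [cnt_nil, zero_add]
    rcases hne with ⟨x, hx⟩
    rcases Finset.mem_inter.mp hx with ⟨hxZ, hxY⟩
    exact absurd hxY (Finset.disjoint_left.mp hdisj hxZ)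
  | cons X X' L e a b ha hb hae hbe h ih =>
    have hstep : ¬ (ed e ⊆ Z) := fun hsub =>
      Finset.disjoint_left.mp hdisj (hsub hae) ha
    simp only [cnt_cons, if_neg hstep, zero_add]
    by_cases hbZ : b ∈ Z
    · have hbY : b ∈ X' := h.subset (Finset.mem_insert_self _ _)
      have hbZY : b ∈ Z ∩ X' := Finset.mem_inter.mpr ⟨hbZ, hbY⟩
      have h1 : cnt (fun t => ed t.1 ⊆ Z) L ≤ (Z ∩ (X' \ insert b X)).card := h.count_le Z
      have hsub : Z ∩ (X' \ insert b X) ⊆ (Z ∩ X').erase b := by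
        intro x hx
        rcases Finset.mem_inter.mp hx with ⟨hxZ, hx2⟩
        rcases Finset.mem_sdiff.mp hx2 with ⟨hxY, hxX⟩
        exact Finset.mem_erase.mpr ⟨fun hxb => hxX (hxb ▸ Finset.mem_insert_self _ _),
          Finset.mem_inter.mpr ⟨hxZ, hxY⟩⟩
      have h2 : ((Z ∩ X').erase b).card = (Z ∩ X').card - 1 := Finset.card_erase_of_mem hbZY
      have hpos : 1 ≤ (Z ∩ X').card := Finset.card_pos.mpr ⟨b, hbZY⟩
      have := Finset.card_le_card hsub
      omega
    · refine ih ?_ hne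
      refine Finset.disjoint_left.mpr fun x hxZ hxX => ?_
      rcases Finset.mem_insert.mp hxX with rfl | hxX
      · exact hbZ hxZ
      · exact Finset.disjoint_left.mp hdisj hxZ hxX

end GrowsLemmas


/-- Greedy growth inside `W` for a crossing-type connectivity hypothesis. -/
lemma greedy {α F : Type*} [DecidableEq α] (ed : F → Finset α) (W : Finset α)
    (hconn : ∀ X ⊆ W, X.Nonempty → X ≠ W →
      ∃ e, ((ed e ∩ W) ∩ X).Nonempty ∧ ((ed e ∩ W) \ X).Nonempty) :
    ∀ (n : ℕ) (X : Finset α), X ⊆ W → X.Nonempty → (W \ X).card ≤ n →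
      ∃ L, Grows (fun e => ed e ∩ W) X L W := by
  intro n
  induction n with
  | zero =>
    intro X hXW _ hcard
    have : W \ X = ∅ := Finset.card_eq_zero.mp (Nat.le_zero.mp hcard)
    have hWX : W ⊆ X := fun x hx => by
      by_contra hxX
      exact absurd (Finset.mem_sdiff.mpr ⟨hx, hxX⟩) (by simp [this])
    have : X = W := Finset.Subset.antisymm hXW hWX
    exact ⟨[], this ▸ Grows.nil X⟩
  | succ n ih =>
    intro X hXW hXne hcard
    by_cases hXeq : X = W
    · exact ⟨[], hXeq ▸ Grows.nil X⟩
    · obtain ⟨e, h1, h2⟩ := hconn X hXW hXne hXeq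
      obtain ⟨u, hu⟩ := h1
      obtain ⟨v, hv⟩ := h2
      rcases Finset.mem_inter.mp hu with ⟨hu1, hu2⟩
      rcases Finset.mem_sdiff.mp hv with ⟨hv1, hv2⟩
      have hvW : v ∈ W := (Finset.mem_inter.mp hv1).2
      have hins : insert v X ⊆ W := Finset.insert_subset hvW hXW
      have hcard2 : (W \ insert v X).card ≤ n := by
        have : W \ insert v X = (W \ X).erase v := by
          ext x; simp [Finset.mem_sdiff, Finset.mem_erase, Finset.mem_insert]; tauto
        rw [this, Finset.card_erase_of_mem (Finset.mem_sdiff.mpr ⟨hvW, hv2⟩)]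
        omega
      obtain ⟨L, hL⟩ := ih (insert v X) hins (Finset.insert_nonempty _ _) hcard2
      exact ⟨(e, u, v) :: L, Grows.cons _ _ _ e u v hu2 hv2 hu1 hv1 hL⟩

/-- Growth of a connected part from any nonempty subset, using only edges inside the part. -/
lemma part_growth [DecidableEq V] (edge : E → Finset V) {p : Finset V}
    (hc : ConnectedIn edge p) {X : Finset V} (hX : X ⊆ p) (hne : X.Nonempty) :
    ∃ L, Grows edge X L p ∧ ∀ t ∈ L, edge t.1 ⊆ p := by
  have hmem : ∀ (g : E) (x : V), x ∈ (if edge g ⊆ p then edge g else ∅ : Finset V) →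
      edge g ⊆ p ∧ x ∈ edge g := by
    intro g x hx
    by_cases h : edge g ⊆ p
    · rw [if_pos h] at hx; exact ⟨h, hx⟩
    · rw [if_neg h] at hx; exact absurd hx (Finset.notMem_empty x)
  have hconn : ∀ Y ⊆ p, Y.Nonempty → Y ≠ p →
      ∃ e, (((if edge e ⊆ p then edge e else ∅) ∩ p) ∩ Y).Nonempty ∧
        (((if edge e ⊆ p then edge e else ∅) ∩ p) \ Y).Nonempty := by
    intro Y hYp hYne hYp'
    obtain ⟨e, h1, h2, h3⟩ := hc Y hYp hYne hYp'
    refine ⟨e, ?_, ?_⟩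
    · obtain ⟨x, hx⟩ := h2
      simp only [Finset.mem_inter] at hx
      obtain ⟨hx1, hx2⟩ := hx
      exact ⟨x, Finset.mem_inter.mpr ⟨Finset.mem_inter.mpr ⟨by rw [if_pos h1]; exact hx1,
        h1 hx1⟩, hx2⟩⟩
    · obtain ⟨x, hx⟩ := h3
      simp only [Finset.mem_sdiff, Finset.mem_inter] at hx
      obtain ⟨⟨hx3, hx4⟩, hx2⟩ := hx
      exact ⟨x, Finset.mem_sdiff.mpr ⟨Finset.mem_inter.mpr ⟨by rw [if_pos h1]; exact hx3,
        hx4⟩, hx2⟩⟩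
  obtain ⟨L, hL⟩ := greedy (fun g => if edge g ⊆ p then edge g else ∅) p hconn
    (p \ X).card X hX hne le_rfl
  refine ⟨L, hL.mono (fun g x hx => ?_), fun t ht => ?_⟩
  · exact (hmem g x (Finset.mem_inter.mp hx).1).2
  · exact (hmem t.1 t.2.1 (Finset.mem_inter.mp (hL.steps t ht).1).1).1


section Main

variable [Fintype V] [DecidableEq V] [Fintype E]
variable (edge : E → Finset V) (P : Finpartition (univ : Finset V))

lemma mem_shrunk {g : E} {p : {p : Finset V // p ∈ P.parts}} :
    p ∈ shrunkEdge edge P g ↔ (edge g ∩ p.1).Nonempty := by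
  simp [shrunkEdge]

lemma hcut_of_parts {g : E} {p q : {p : Finset V // p ∈ P.parts}} (hne : p ≠ q)
    (hp : p ∈ shrunkEdge edge P g) (hq : q ∈ shrunkEdge edge P g) : g ∈ hcut edge P := by
  rw [mem_shrunk] at hp hq
  simp only [hcut, Finset.mem_filter, Finset.mem_univ, true_and]
  exact ⟨p.1, p.2, q.1, q.2, fun h => hne (Subtype.ext h), hp, hq⟩

lemma not_subset_of_mem_hcut {g : E} (hg : g ∈ hcut edge P) {p : Finset V}
    (hp : p ∈ P.parts) : ¬ edge g ⊆ p := by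
  intro hsub
  simp only [hcut, Finset.mem_filter, Finset.mem_univ, true_and] at hg
  obtain ⟨p₁, hp₁, p₂, hp₂, hne, ⟨x, hx⟩, ⟨y, hy⟩⟩ := hg
  rcases Finset.mem_inter.mp hx with ⟨hx1, hx2⟩
  rcases Finset.mem_inter.mp hy with ⟨hy1, hy2⟩
  exact hne ((P.eq_of_mem_parts hp₁ hp (hx2) (hsub hx1)).trans
    (P.eq_of_mem_parts hp hp₂ (hsub hy1) hy2))

lemma lift (hfeas : Feasible edge P) {Xb Yb : Finset {p : Finset V // p ∈ P.parts}}
    {Lb : List (E × {p : Finset V // p ∈ P.parts} × {p : Finset V // p ∈ P.parts})}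
    (h : Grows (shrunkEdge edge P) Xb Lb Yb) :
    ∃ L : List (E × V × V),
      Grows edge (Xb.biUnion fun p => p.1) L (Yb.biUnion fun p => p.1) ∧
      ∀ g ∈ hcut edge P, cnt (fun t => t.1 = g) L = cnt (fun t => t.1 = g) Lb := by
  induction h with
  | nil X => exact ⟨[], Grows.nil _, fun _ _ => rfl⟩
  | cons Xb Yb Lb g p q hp hq hge hqe hrest ih =>
    obtain ⟨u, hu⟩ := (mem_shrunk edge P).mp hge
    obtain ⟨v, hv⟩ := (mem_shrunk edge P).mp hqe
    rcases Finset.mem_inter.mp hu with ⟨hu1, hu2⟩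
    rcases Finset.mem_inter.mp hv with ⟨hv1, hv2⟩
    have huU : u ∈ Xb.biUnion fun p => p.1 := Finset.mem_biUnion.mpr ⟨p, hp, hu2⟩
    have hvU : v ∉ Xb.biUnion fun p => p.1 := by
      intro hvU
      obtain ⟨p', hp', hv'⟩ := Finset.mem_biUnion.mp hvU
      exact hq ((Subtype.ext (P.eq_of_mem_parts p'.2 q.2 hv' hv2) : p' = q) ▸ hp')
    obtain ⟨Lq, hLq, hLqin⟩ := part_growth edge (hfeas q.1 q.2)
      (Finset.singleton_subset_iff.mpr hv2) (Finset.singleton_nonempty v)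
    have hdisj : Disjoint (Xb.biUnion fun p => p.1) (q.1 \ {v}) := by
      refine Finset.disjoint_left.mpr fun x hx hx' => ?_
      obtain ⟨p', hp', hxp'⟩ := Finset.mem_biUnion.mp hx
      rcases Finset.mem_sdiff.mp hx' with ⟨hxq, _⟩
      exact hq ((Subtype.ext (P.eq_of_mem_parts p'.2 q.2 hxp' hxq) : p' = q) ▸ hp')
    have hshift : Grows edge (insert v (Xb.biUnion fun p => p.1)) Lq
        (q.1 ∪ Xb.biUnion fun p => p.1) := by
      have := hLq.union (Xb.biUnion fun p => p.1) hdisj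
      rwa [← Finset.insert_eq] at this
    obtain ⟨Lr, hLr, hLrcnt⟩ := ih
    have hbi : (insert q Xb).biUnion (fun p => p.1) = q.1 ∪ Xb.biUnion fun p => p.1 :=
      Finset.biUnion_insert
    rw [hbi] at hLr
    refine ⟨(g, u, v) :: (Lq ++ Lr), ?_, ?_⟩
    · exact Grows.cons _ _ _ g u v huU hvU hu1 hv1 (hshift.append hLr)
    · intro g' hg'
      have hLq0 : cnt (fun t => t.1 = g') Lq = 0 :=
        cnt_eq_zero fun t ht hteq =>
          not_subset_of_mem_hcut edge P hg' q.2 (hteq ▸ hLqin t ht)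
      simp only [cnt_cons, cnt_append, hLq0, hLrcnt g' hg']
      ring

variable [DecidableEq E]

lemma connectedOn_cross {F PT : Type*} [DecidableEq PT] {ed : F → Finset PT} {W : Finset PT}
    (h : ConnectedOn ed W) :
    ∀ X ⊆ W, X.Nonempty → X ≠ W →
      ∃ e, ((ed e ∩ W) ∩ X).Nonempty ∧ ((ed e ∩ W) \ X).Nonempty := by
  intro X hX h1 h2
  obtain ⟨e, h3, h4⟩ := h X hX h1 h2
  obtain ⟨x, hx⟩ := h3
  obtain ⟨y, hy⟩ := h4
  simp only [Finset.mem_inter, Finset.mem_sdiff] at hx hy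
  exact ⟨e, ⟨x, Finset.mem_inter.mpr ⟨Finset.mem_inter.mpr hx.1, hx.2⟩⟩,
    ⟨y, Finset.mem_sdiff.mpr ⟨Finset.mem_inter.mpr hy.1, hy.2⟩⟩⟩

/-- The key construction: for each vertex `a` of the shrunk hypergraph, a "base" multiset of
cut edges such that adding any single cut edge containing `a` yields a tight multitree. -/
lemma exchange (hfeas : Feasible edge P) (hP : 2 ≤ P.parts.card)
    (a : {p : Finset V // p ∈ P.parts})
    (hbc : ConnectedOn (shrunkEdge edge P) (univ \ {a})) :
    ∃ base : E → ℕ, (∑ g ∈ hcut edge P, base g) = P.parts.card - 2 ∧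
      ∀ e, e ∈ hcut edge P → a ∈ shrunkEdge edge P e →
        ∃ m : E → ℕ, IsMultiTree edge m ∧
          ∀ g ∈ hcut edge P, m g = base g + (if g = e then 1 else 0) := by
  set W : Finset {p : Finset V // p ∈ P.parts} := univ \ {a} with hW
  have hkcard : Fintype.card {p : Finset V // p ∈ P.parts} = P.parts.card := Fintype.card_coe _
  have hWcard : W.card = P.parts.card - 1 := by
    rw [hW, Finset.card_sdiff_of_subset (Finset.singleton_subset_iff.mpr (Finset.mem_univ a)),
      Finset.card_univ, hkcard, Finset.card_singleton]
  have hWne : W.Nonempty := Finset.card_pos.mp (by omega)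
  obtain ⟨r, hr⟩ := hWne
  obtain ⟨Lb0, hLb0⟩ := greedy (shrunkEdge edge P) W (connectedOn_cross hbc)
    (W \ {r}).card {r} (Finset.singleton_subset_iff.mpr hr) (Finset.singleton_nonempty r) le_rfl
  have hLb0cut : ∀ t ∈ Lb0, t.1 ∈ hcut edge P := by
    intro t ht
    obtain ⟨h1, h2, h3⟩ := hLb0.steps t ht
    exact hcut_of_parts edge P h3 (Finset.mem_inter.mp h1).1 (Finset.mem_inter.mp h2).1
  have hLb0len : Lb0.length = P.parts.card - 2 := by
    have := hLb0.card_eq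
    rw [Finset.card_singleton, hWcard] at this
    omega
  refine ⟨fun g => cnt (fun t => t.1 = g) Lb0, ?_, ?_⟩
  · rw [sum_cnt, cnt_eq_length hLb0cut, hLb0len]
  · intro e he ha
    -- find b ∈ shrunkEdge e with b ≠ a
    have hb : ∃ b : {p : Finset V // p ∈ P.parts}, b ∈ shrunkEdge edge P e ∧ b ≠ a := by
      have he' := he
      simp only [hcut, Finset.mem_filter, Finset.mem_univ, true_and] at he'
      obtain ⟨p₁, hp₁, p₂, hp₂, hne, h1, h2⟩ := he'
      by_cases hc : (⟨p₁, hp₁⟩ : {p : Finset V // p ∈ P.parts}) = a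
      · exact ⟨⟨p₂, hp₂⟩, (mem_shrunk edge P).mpr h2,
          fun hc2 => hne (congrArg Subtype.val (hc.trans hc2.symm))⟩
      · exact ⟨⟨p₁, hp₁⟩, (mem_shrunk edge P).mpr h1, hc⟩
    obtain ⟨b, hbe, hba⟩ := hb
    have hbW : b ∈ W := by simp [hW, hba]
    have haW : a ∉ W := by simp [hW]
    have hinsW : insert a W = univ := by
      ext x; by_cases hx : x = a <;> simp [hW, hx]
    have hGb : Grows (shrunkEdge edge P) {r} (Lb0 ++ [(e, b, a)]) univ := by
      refine (hLb0.mono (fun g => Finset.inter_subset_left)).append ?_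
      refine Grows.cons _ _ _ e b a hbW haW hbe ha ?_
      rw [hinsW]
      exact Grows.nil _
    obtain ⟨L, hL, hLcnt⟩ := lift edge P hfeas hGb
    have hbi1 : ({r} : Finset {p : Finset V // p ∈ P.parts}).biUnion (fun p => p.1) = r.1 :=
      Finset.singleton_biUnion
    have hbi2 : (univ : Finset {p : Finset V // p ∈ P.parts}).biUnion (fun p => p.1)
        = (univ : Finset V) := by
      refine Finset.eq_univ_iff_forall.mpr fun x => ?_
      rw [Finset.mem_biUnion]
      obtain ⟨t, ht, hxt⟩ := P.exists_mem (Finset.mem_univ x)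
      exact ⟨⟨t, ht⟩, Finset.mem_univ _, hxt⟩
    rw [hbi1, hbi2] at hL
    obtain ⟨v₀, hv₀⟩ := P.nonempty_of_mem_parts r.2
    obtain ⟨Lr, hLr, hLrin⟩ := part_growth edge (hfeas r.1 r.2)
      (Finset.singleton_subset_iff.mpr hv₀) (Finset.singleton_nonempty v₀)
    have hG : Grows edge {v₀} (Lr ++ L) univ := hLr.append hL
    refine ⟨fun g => cnt (fun t => t.1 = g) (Lr ++ L), ⟨?_, ?_⟩, ?_⟩
    · -- total count
      rw [sum_cnt]
      have hlen := cnt_eq_length (l := Lr ++ L)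
        (p := fun t : E × V × V => t.1 ∈ (univ : Finset E)) (fun t _ => Finset.mem_univ t.1)
      rw [hlen]
      have := hG.card_eq
      rw [Finset.card_singleton, Finset.card_univ] at this
      have h1 : 1 ≤ Fintype.card V := by
        rw [← Finset.card_univ]
        exact Finset.card_pos.mpr ⟨v₀, Finset.mem_univ v₀⟩
      omega
    · -- hyperforest bound
      intro Y hYne
      have hconv : ∑ g ∈ edgesIn edge Y, cnt (fun t => t.1 = g) (Lr ++ L)
          = cnt (fun t => edge t.1 ⊆ Y) (Lr ++ L) := by
        rw [sum_cnt]
        exact cnt_congr fun t _ => by simp [edgesIn]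
      rw [hconv]
      by_cases hv : v₀ ∈ Y
      · have := hG.count_le Y
        have heq : Y ∩ ((univ : Finset V) \ {v₀}) = Y.erase v₀ := by
          ext x; simp [Finset.mem_erase, and_comm]
        rw [heq, Finset.card_erase_of_mem hv] at this
        exact this
      · have := hG.count_lt Y (Finset.disjoint_singleton_right.mpr hv) (by rwa [Finset.inter_univ])
        rw [Finset.inter_univ] at this
        omega
    · -- counts on the cut
      intro g hg
      have hLr0 : cnt (fun t => t.1 = g) Lr = 0 :=
        cnt_eq_zero fun t ht hteq =>
          not_subset_of_mem_hcut edge P hg r.2 (hteq ▸ hLrin t ht)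
      show cnt (fun t => t.1 = g) (Lr ++ L) = cnt (fun t => t.1 = g) Lb0 + if g = e then 1 else 0
      rw [cnt_append, hLr0, hLcnt g hg, cnt_append]
      have hsing : cnt (fun t => t.1 = g) [(e, b, a)] = if g = e then 1 else 0 := by
        by_cases hge : g = e
        · simp [cnt, hge]
        · simp [cnt, hge, Ne.symm hge]
      rw [hsing]
      ring

lemma cut_lower (hP : 2 ≤ P.parts.card) {m : E → ℕ} (hm : IsMultiTree edge m) :
    P.parts.card - 1 ≤ ∑ g ∈ hcut edge P, m g := by
  obtain ⟨p₀, hp₀⟩ := Finset.card_pos.mp (show 0 < P.parts.card by omega)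
  obtain ⟨v₀, hv₀⟩ := P.nonempty_of_mem_parts hp₀
  have hzero : ∀ g, edge g = ∅ → m g = 0 := by
    intro g hg
    have h1 : g ∈ edgesIn edge {v₀} := by
      simp [edgesIn, hg]
    have h2 := hm.2 {v₀} (Finset.singleton_nonempty v₀)
    have h3 : m g ≤ ∑ e ∈ edgesIn edge {v₀}, m e :=
      Finset.single_le_sum (fun _ _ => Nat.zero_le _) h1
    simp only [Finset.card_singleton] at h2
    omega
  have hpart : ∀ g ∈ univ \ hcut edge P, m g ≠ 0 → ∃ p ∈ P.parts, edge g ⊆ p := by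
    intro g hg hm0
    have hne : (edge g).Nonempty := by
      rcases Finset.eq_empty_or_nonempty (edge g) with h | h
      · exact absurd (hzero g h) hm0
      · exact h
    obtain ⟨x, hx⟩ := hne
    obtain ⟨p, hp, hxp⟩ := P.exists_mem (Finset.mem_univ x)
    refine ⟨p, hp, fun u hu => ?_⟩
    obtain ⟨q, hq, huq⟩ := P.exists_mem (Finset.mem_univ u)
    by_cases hpq : q = p
    · exact hpq ▸ huq
    · exfalso
      have : g ∈ hcut edge P := by
        simp only [hcut, Finset.mem_filter, Finset.mem_univ, true_and]
        exact ⟨p, hp, q, hq, Ne.symm hpq, ⟨x, Finset.mem_inter.mpr ⟨hx, hxp⟩⟩,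
          ⟨u, Finset.mem_inter.mpr ⟨hu, huq⟩⟩⟩
      exact (Finset.mem_sdiff.mp hg).2 this
  have hone : ∀ p ∈ P.parts, 1 ≤ p.card :=
    fun p hp => Finset.card_pos.mpr (P.nonempty_of_mem_parts hp)
  -- sum over non-cut edges
  set D := (univ \ hcut edge P).filter (fun g => m g ≠ 0) with hD
  have hD1 : ∑ g ∈ univ \ hcut edge P, m g = ∑ g ∈ D, m g :=
    (Finset.sum_filter_ne_zero _).symm
  have hDsub : D ⊆ P.parts.biUnion (fun p => D ∩ edgesIn edge p) := by
    intro g hg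
    rcases Finset.mem_filter.mp hg with ⟨hg1, hg2⟩
    obtain ⟨p, hp, hsub⟩ := hpart g hg1 hg2
    exact Finset.mem_biUnion.mpr ⟨p, hp,
      Finset.mem_inter.mpr ⟨hg, by simp [edgesIn, hsub]⟩⟩
  have hdisj : ∀ p ∈ P.parts, ∀ q ∈ P.parts, p ≠ q →
      Disjoint (D ∩ edgesIn edge p) (D ∩ edgesIn edge q) := by
    intro p hp q hq hpq
    refine Finset.disjoint_left.mpr fun g hgp hgq => ?_
    rcases Finset.mem_inter.mp hgp with ⟨hgD, hgp'⟩
    rcases Finset.mem_inter.mp hgq with ⟨-, hgq'⟩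
    have h1 : edge g ⊆ p := by simpa [edgesIn] using hgp'
    have h2 : edge g ⊆ q := by simpa [edgesIn] using hgq'
    have hne : (edge g).Nonempty := by
      rcases Finset.eq_empty_or_nonempty (edge g) with h | h
      · exact absurd (hzero g h) (Finset.mem_filter.mp hgD).2
      · exact h
    obtain ⟨x, hx⟩ := hne
    exact hpq (P.eq_of_mem_parts hp hq (h1 hx) (h2 hx))
  have hb1 : ∑ g ∈ D, m g ≤ ∑ p ∈ P.parts, ∑ g ∈ D ∩ edgesIn edge p, m g := by
    calc ∑ g ∈ D, m g ≤ ∑ g ∈ P.parts.biUnion (fun p => D ∩ edgesIn edge p), m g :=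
          Finset.sum_le_sum_of_subset hDsub
    _ = ∑ p ∈ P.parts, ∑ g ∈ D ∩ edgesIn edge p, m g := Finset.sum_biUnion hdisj
  have hb2 : ∑ p ∈ P.parts, ∑ g ∈ D ∩ edgesIn edge p, m g ≤ ∑ p ∈ P.parts, (p.card - 1) := by
    refine Finset.sum_le_sum fun p hp => ?_
    calc ∑ g ∈ D ∩ edgesIn edge p, m g ≤ ∑ g ∈ edgesIn edge p, m g :=
          Finset.sum_le_sum_of_subset Finset.inter_subset_right
    _ ≤ p.card - 1 := hm.2 p (P.nonempty_of_mem_parts hp)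
  have hcards : ∑ p ∈ P.parts, (p.card - 1) + P.parts.card = Fintype.card V := by
    have h1 : ∑ p ∈ P.parts, (p.card - 1) + ∑ _p ∈ P.parts, 1
        = ∑ p ∈ P.parts, ((p.card - 1) + 1) := Finset.sum_add_distrib.symm
    have h2 : ∑ p ∈ P.parts, ((p.card - 1) + 1) = ∑ p ∈ P.parts, p.card :=
      Finset.sum_congr rfl fun p hp => by have := hone p hp; omega
    have h3 : ∑ p ∈ P.parts, p.card = Fintype.card V := by
      rw [P.sum_card_parts, Finset.card_univ]
    have h4 : ∑ _p ∈ P.parts, 1 = P.parts.card := by simp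
    omega
  have hkV : P.parts.card ≤ Fintype.card V := by
    have : ∑ _p ∈ P.parts, 1 ≤ ∑ p ∈ P.parts, p.card := Finset.sum_le_sum hone
    simp only [Finset.sum_const, smul_eq_mul, mul_one] at this
    rw [P.sum_card_parts, Finset.card_univ] at this
    exact this
  have hsplit : ∑ g ∈ univ \ hcut edge P, m g + ∑ g ∈ hcut edge P, m g = ∑ g, m g :=
    Finset.sum_sdiff (Finset.subset_univ _)
  have htot := hm.1
  omega

end Main

end Stmt7Aux

/-- If `H` is connected and `P` is a feasible partition (with at least two
parts) whose shrunk hypergraph `H_P` is vertex-biconnected, then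
`w = (1/(|P|-1))·1_{δ(P)}` is an extreme point of `Adm(Ω(H))`. -/
theorem stmt7 {V E : Type*} [Fintype V] [DecidableEq V] [Fintype E] [DecidableEq E]
    (edge : E → Finset V) (hconn : HConnected edge)
    (P : Finpartition (univ : Finset V)) (hfeas : Feasible edge P)
    (hP : 2 ≤ P.parts.card) (hbc : ShrunkBiconnected edge P) :
    IsExtremePt (AdmSet (OmegaSet edge))
      (fun e => (1 / ((P.parts.card : ℝ) - 1)) * (if e ∈ hcut edge P then 1 else 0)) := by
  classical
  have hk2R : (2:ℝ) ≤ (P.parts.card : ℝ) := by exact_mod_cast hP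
  have hkpos : (0:ℝ) < (P.parts.card : ℝ) - 1 := by linarith
  have hkne : ((P.parts.card : ℝ) - 1) ≠ 0 := ne_of_gt hkpos
  have hcast : ((P.parts.card - 1 : ℕ) : ℝ) = (P.parts.card : ℝ) - 1 := by
    have h1 : 1 ≤ P.parts.card := by omega
    push_cast [Nat.cast_sub h1]
    ring
  -- evaluation of the dot product with w
  have hw : ∀ m : E → ℕ,
      ∑ e, (m e : ℝ) * ((1 / ((P.parts.card : ℝ) - 1)) * (if e ∈ hcut edge P then 1 else 0))
        = (∑ e ∈ hcut edge P, (m e : ℝ)) / ((P.parts.card : ℝ) - 1) := by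
    intro m
    have h1 : ∀ e, (m e : ℝ) * ((1 / ((P.parts.card : ℝ) - 1)) * (if e ∈ hcut edge P then 1 else 0))
        = if e ∈ hcut edge P then (m e : ℝ) / ((P.parts.card : ℝ) - 1) else 0 := by
      intro e
      split_ifs <;> field_simp <;> simp
    rw [Finset.sum_congr rfl fun e _ => h1 e, ← Finset.sum_filter, Finset.filter_univ_mem,
      ← Finset.sum_div]
  have hwadm : (fun e => (1 / ((P.parts.card : ℝ) - 1)) * (if e ∈ hcut edge P then 1 else 0))
      ∈ AdmSet (OmegaSet edge) := by
    constructor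
    · intro e
      have h0 : (0:ℝ) ≤ 1 / ((P.parts.card : ℝ) - 1) := by positivity
      show (0:ℝ) ≤ 1 / ((P.parts.card : ℝ) - 1) * (if e ∈ hcut edge P then 1 else 0)
      split_ifs
      · rw [mul_one]; exact h0
      · rw [mul_zero]
    · rintro x ⟨m, hm, rfl⟩
      rw [hw m]
      rw [le_div_iff₀ hkpos, one_mul]
      have h1 := Stmt7Aux.cut_lower edge P hP hm
      have h2 : ((P.parts.card - 1 : ℕ) : ℝ) ≤ ((∑ g ∈ hcut edge P, m g : ℕ) : ℝ) := by
        exact_mod_cast h1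
      rw [hcast, Nat.cast_sum] at h2
      exact h2
  refine ⟨hwadm, ?_⟩
  intro y hy z hz hmid
  -- off-cut coordinates vanish
  have hoff : ∀ g, g ∉ hcut edge P → y g = 0 ∧ z g = 0 := by
    intro g hg
    have h : 1 / ((P.parts.card : ℝ) - 1) * (if g ∈ hcut edge P then 1 else 0)
        = (y g + z g) / 2 := hmid g
    rw [if_neg hg, mul_zero] at h
    have hy0 := hy.1 g
    have hz0 := hz.1 g
    constructor <;> linarith
  have hsum2 : ∀ g ∈ hcut edge P, y g + z g = 2 / ((P.parts.card : ℝ) - 1) := by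
    intro g hg
    have h : 1 / ((P.parts.card : ℝ) - 1) * (if g ∈ hcut edge P then 1 else 0)
        = (y g + z g) / 2 := hmid g
    rw [if_pos hg, mul_one] at h
    field_simp at h ⊢
    linarith
  -- dot products restrict to the cut
  have hdotδ : ∀ (m : E → ℕ) (ρ : E → ℝ), (∀ g, g ∉ hcut edge P → ρ g = 0) →
      ∑ e, (m e : ℝ) * ρ e = ∑ e ∈ hcut edge P, (m e : ℝ) * ρ e := by
    intro m ρ h0
    exact (Finset.sum_subset (Finset.subset_univ _)
      (fun e _ he => by rw [h0 e he, mul_zero])).symm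
  -- tight multitrees pin down the dot products
  have tight : ∀ (m : E → ℕ), IsMultiTree edge m →
      (∑ g ∈ hcut edge P, m g) = P.parts.card - 1 →
      ∑ g ∈ hcut edge P, (m g : ℝ) * y g = 1 ∧ ∑ g ∈ hcut edge P, (m g : ℝ) * z g = 1 := by
    intro m hm hms
    have h1 : 1 ≤ ∑ e, (m e : ℝ) * y e := hy.2 _ ⟨m, hm, rfl⟩
    have h2 : 1 ≤ ∑ e, (m e : ℝ) * z e := hz.2 _ ⟨m, hm, rfl⟩
    rw [hdotδ m y (fun g hg => (hoff g hg).1)] at h1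
    rw [hdotδ m z (fun g hg => (hoff g hg).2)] at h2
    have hcs : ∑ g ∈ hcut edge P, (m g : ℝ) = (P.parts.card : ℝ) - 1 := by
      rw [← Nat.cast_sum, hms, hcast]
    have h3 : ∑ g ∈ hcut edge P, (m g : ℝ) * y g + ∑ g ∈ hcut edge P, (m g : ℝ) * z g
        = 2 := by
      rw [← Finset.sum_add_distrib]
      have h4 : ∀ g ∈ hcut edge P, (m g : ℝ) * y g + (m g : ℝ) * z g
          = (m g : ℝ) * (2 / ((P.parts.card : ℝ) - 1)) := by
        intro g hg
        rw [← mul_add, hsum2 g hg]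
      rw [Finset.sum_congr rfl h4, ← Finset.sum_mul, hcs]
      field_simp
    constructor <;> linarith
  -- helper: expansion of tight sums
  have hexp : ∀ (base : E → ℕ) (ρ : E → ℝ) (e' : E), e' ∈ hcut edge P →
      ∀ (mm : E → ℕ), (∀ g ∈ hcut edge P, mm g = base g + if g = e' then 1 else 0) →
      ∑ g ∈ hcut edge P, (mm g : ℝ) * ρ g
        = ∑ g ∈ hcut edge P, (base g : ℝ) * ρ g + ρ e' := by
    intro base ρ e' he' mm hmm
    have h1 : ∀ g ∈ hcut edge P, (mm g : ℝ) * ρ g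
        = (base g : ℝ) * ρ g + (if g = e' then ρ g else 0) := by
      intro g hg
      rw [hmm g hg]
      push_cast
      split_ifs <;> ring
    rw [Finset.sum_congr rfl h1, Finset.sum_add_distrib,
      Finset.sum_ite_eq' (hcut edge P) e' ρ, if_pos he']
  -- exchange argument: edges sharing a shrunk vertex have equal coordinates
  have key : ∀ (a : {p : Finset V // p ∈ P.parts}) (e f : E), e ∈ hcut edge P →
      f ∈ hcut edge P → a ∈ shrunkEdge edge P e → a ∈ shrunkEdge edge P f →
      y e = y f ∧ z e = z f := by
    intro a e f he hf hae haf
    obtain ⟨base, hbase, hmk⟩ := Stmt7Aux.exchange edge P hfeas hP a (hbc.2 a)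
    obtain ⟨m, hm, hmc⟩ := hmk e he hae
    obtain ⟨m', hm', hmc'⟩ := hmk f hf haf
    have hsumite : ∀ e', e' ∈ hcut edge P →
        (∑ g ∈ hcut edge P, (base g + if g = e' then 1 else 0))
          = P.parts.card - 1 := by
      intro e' he'
      rw [Finset.sum_add_distrib, hbase, Finset.sum_ite_eq' (hcut edge P) e' (fun _ => 1),
        if_pos he']
      omega
    have hms : ∑ g ∈ hcut edge P, m g = P.parts.card - 1 := by
      rw [Finset.sum_congr rfl fun g hg => hmc g hg]
      exact hsumite e he
    have hms' : ∑ g ∈ hcut edge P, m' g = P.parts.card - 1 := by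
      rw [Finset.sum_congr rfl fun g hg => hmc' g hg]
      exact hsumite f hf
    obtain ⟨ty, tz⟩ := tight m hm hms
    obtain ⟨ty', tz'⟩ := tight m' hm' hms'
    rw [hexp base y e he m hmc] at ty
    rw [hexp base y f hf m' hmc'] at ty'
    rw [hexp base z e he m hmc] at tz
    rw [hexp base z f hf m' hmc'] at tz'
    constructor <;> linarith
  -- nonemptiness of shrunk edges of cut edges
  have hshne : ∀ g ∈ hcut edge P, ∃ p : {p : Finset V // p ∈ P.parts},
      p ∈ shrunkEdge edge P g := by
    intro g hg
    simp only [hcut, Finset.mem_filter, Finset.mem_univ, true_and] at hg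
    obtain ⟨p₁, hp₁, -, -, -, h1, -⟩ := hg
    exact ⟨⟨p₁, hp₁⟩, (Stmt7Aux.mem_shrunk edge P).mpr h1⟩
  -- connectivity of the cut through shared shrunk vertices
  have chain : ∀ e ∈ hcut edge P, ∀ f ∈ hcut edge P, y e = y f ∧ z e = z f := by
    intro e he f hf
    by_contra hcon
    set R := (hcut edge P).filter (fun g => y g = y e ∧ z g = z e) with hR
    have heR : e ∈ R := Finset.mem_filter.mpr ⟨he, rfl, rfl⟩
    have hfR : f ∉ R := by
      intro h
      obtain ⟨-, h1, h2⟩ := Finset.mem_filter.mp h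
      exact hcon ⟨h1.symm, h2.symm⟩
    set Uu := (univ : Finset {p : Finset V // p ∈ P.parts}).filter
      (fun p => ∃ g ∈ R, p ∈ shrunkEdge edge P g) with hUu
    have hclosed : ∀ g ∈ hcut edge P, ∀ p : {p : Finset V // p ∈ P.parts},
        p ∈ shrunkEdge edge P g → p ∈ Uu → g ∈ R := by
      intro g hg p hpg hpU
      obtain ⟨-, g₁, hg₁R, hpg₁⟩ := Finset.mem_filter.mp hpU
      obtain ⟨hg₁δ, hy1, hz1⟩ := Finset.mem_filter.mp hg₁R
      obtain ⟨hyy, hzz⟩ := key p g g₁ hg hg₁δ hpg hpg₁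
      exact Finset.mem_filter.mpr ⟨hg, hyy.trans hy1, hzz.trans hz1⟩
    obtain ⟨pe, hpe⟩ := hshne e he
    have hUne : Uu.Nonempty :=
      ⟨pe, Finset.mem_filter.mpr ⟨Finset.mem_univ _, e, heR, hpe⟩⟩
    obtain ⟨pf, hpf⟩ := hshne f hf
    have hpfU : pf ∉ Uu := fun h => hfR (hclosed f hf pf hpf h)
    have hUneq : Uu ≠ univ := fun h => hpfU (h ▸ Finset.mem_univ pf)
    obtain ⟨g₀, -, h1, h2⟩ := hbc.1 Uu (Finset.subset_univ _) hUne hUneq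
    obtain ⟨x, hx⟩ := h1
    obtain ⟨w', hw'⟩ := h2
    simp only [Finset.mem_inter, Finset.mem_sdiff, Finset.mem_univ, and_true] at hx hw'
    obtain ⟨hx1, hx2⟩ := hx
    obtain ⟨hw1, hw2⟩ := hw'
    have hxw : x ≠ w' := fun h => hw2 (h ▸ hx2)
    have hg₀δ : g₀ ∈ hcut edge P := Stmt7Aux.hcut_of_parts edge P hxw hx1 hw1
    have hg₀R : g₀ ∈ R := hclosed g₀ hg₀δ x hx1 hx2
    exact hw2 (Finset.mem_filter.mpr ⟨Finset.mem_univ _, g₀, hg₀R, hw1⟩)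
  -- conclude: all cut coordinates equal 1/(k-1)
  have hval : ∀ g ∈ hcut edge P, y g = 1 / ((P.parts.card : ℝ) - 1)
      ∧ z g = 1 / ((P.parts.card : ℝ) - 1) := by
    intro g hg
    obtain ⟨a, ha⟩ := hshne g hg
    obtain ⟨base, hbase, hmk⟩ := Stmt7Aux.exchange edge P hfeas hP a (hbc.2 a)
    obtain ⟨m, hm, hmc⟩ := hmk g hg ha
    have hms : ∑ h ∈ hcut edge P, m h = P.parts.card - 1 := by
      rw [Finset.sum_congr rfl fun h hh => hmc h hh, Finset.sum_add_distrib, hbase,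
        Finset.sum_ite_eq' (hcut edge P) g (fun _ => 1), if_pos hg]
      omega
    obtain ⟨ty, tz⟩ := tight m hm hms
    have hconst : ∀ (ρ : E → ℝ), (∑ h ∈ hcut edge P, (m h : ℝ) * ρ h = 1) →
        (∀ h ∈ hcut edge P, ρ h = ρ g) → ρ g = 1 / ((P.parts.card : ℝ) - 1) := by
      intro ρ hρ hρc
      have h1 : ∑ h ∈ hcut edge P, (m h : ℝ) * ρ h
          = (∑ h ∈ hcut edge P, (m h : ℝ)) * ρ g := by
        rw [Finset.sum_mul]
        exact Finset.sum_congr rfl fun h hh => by rw [hρc h hh]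
      have h2 : ∑ h ∈ hcut edge P, (m h : ℝ) = (P.parts.card : ℝ) - 1 := by
        rw [← Nat.cast_sum, hms, hcast]
      rw [h1, h2] at hρ
      field_simp
      linarith
    constructor
    · exact hconst y ty fun h hh => (chain h hh g hg).1
    · exact hconst z tz fun h hh => (chain h hh g hg).2
  funext g
  by_cases hg : g ∈ hcut edge P
  · obtain ⟨h1, h2⟩ := hval g hg
    rw [h1, h2]
  · obtain ⟨h1, h2⟩ := hoff g hg
    rw [h1, h2]
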